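/- Multivariate deformed Cauchy formula: let 0 < τ₂ < τ₁ be reals, let n, k be naturals with k ≥ 1, and let x₁, …, x_{k+1} be real numbers. Then C(x₁ + ⋯ + x_{k+1}, n) = Σ τ₁^{Σ_{j=1}^{k} r_j(z_j − (n − s_j))} · τ₂^{Σ_{j=1}^{k} (n − s_j)(x_j − r_j)} · ∏_{j=1}^{k+1} C(x_j, r_j), where the sum runs over all tuples (r₁,…,r_k) of naturals with r₁ + ⋯ + r_k ≤ n, and where s_j = r₁ + ⋯ + r_j, r_{k+1} = n − s_k, and z_j = x_{j+1} + ⋯ + x_{k+1}. -/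

import Mathlib

open Finset

noncomputable def dnum (τ₁ τ₂ x : ℝ) : ℝ := (τ₁ ^ x - τ₂ ^ x) / (τ₁ - τ₂)

noncomputable def dfac (τ₁ τ₂ : ℝ) (r : ℕ) : ℝ :=
  ∏ j ∈ Finset.range r, dnum τ₁ τ₂ ((j : ℝ) + 1)

noncomputable def dfall (τ₁ τ₂ x : ℝ) (r : ℕ) : ℝ :=
  ∏ i ∈ Finset.range r, dnum τ₁ τ₂ (x - (i : ℝ))

noncomputable def dbinom (τ₁ τ₂ x : ℝ) (r : ℕ) : ℝ := dfall τ₁ τ₂ x r / dfac τ₁ τ₂ r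

noncomputable def dmulti (τ₁ τ₂ x : ℝ) {k : ℕ} (r : Fin k → ℕ) : ℝ :=
  dfall τ₁ τ₂ x (∑ j, r j) / ∏ j, dfac τ₁ τ₂ (r j)

lemma dfall_succ (τ₁ τ₂ x : ℝ) (n : ℕ) :
    dfall τ₁ τ₂ x (n + 1) = dfall τ₁ τ₂ x n * dnum τ₁ τ₂ (x - n) := by
  unfold dfall; rw [Finset.prod_range_succ]

lemma dfac_succ (τ₁ τ₂ : ℝ) (n : ℕ) :
    dfac τ₁ τ₂ (n + 1) = dfac τ₁ τ₂ n * dnum τ₁ τ₂ ((n:ℝ) + 1) := by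
  unfold dfac; rw [Finset.prod_range_succ]
noncomputable def Bc (τ₁ τ₂ : ℝ) : ℕ → ℕ → ℝ
  | 0, 0 => 1
  | 0, _+1 => 0
  | n+1, 0 => Bc τ₁ τ₂ n 0
  | n+1, r+1 => τ₁ ^ ((r:ℝ)+1) * Bc τ₁ τ₂ n (r+1) + τ₂ ^ ((n:ℝ) - r) * Bc τ₁ τ₂ n r

lemma Bc_zero (τ₁ τ₂ : ℝ) : ∀ n, Bc τ₁ τ₂ n 0 = 1
  | 0 => rfl
  | n+1 => by rw [Bc, Bc_zero τ₁ τ₂ n]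

lemma Bc_big (τ₁ τ₂ : ℝ) : ∀ n r, n < r → Bc τ₁ τ₂ n r = 0
  | 0, _+1, _ => rfl
  | n+1, r+1, h => by
    rw [Bc, Bc_big τ₁ τ₂ n (r+1) (by omega), Bc_big τ₁ τ₂ n r (by omega)] ; ring

noncomputable def Tm (τ₁ τ₂ x y : ℝ) (n r : ℕ) : ℝ :=
  Bc τ₁ τ₂ n r * τ₁ ^ ((r:ℝ) * (y - ((n:ℝ) - (r:ℝ)))) * τ₂ ^ (((n:ℝ) - (r:ℝ)) * (x - (r:ℝ)))
    * dfall τ₁ τ₂ x r * dfall τ₁ τ₂ y (n - r)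

lemma Tm_big (τ₁ τ₂ x y : ℝ) (n r : ℕ) (h : n < r) : Tm τ₁ τ₂ x y n r = 0 := by
  unfold Tm; rw [Bc_big τ₁ τ₂ n r h]; ring

section
variable {τ₁ τ₂ : ℝ} (h2 : 0 < τ₂) (h12 : τ₂ < τ₁)
include h2 h12

lemma dnum_add (a b : ℝ) : dnum τ₁ τ₂ (a + b) = τ₂ ^ b * dnum τ₁ τ₂ a + τ₁ ^ a * dnum τ₁ τ₂ b := by
  have h1 := h2.trans h12
  unfold dnum
  rw [Real.rpow_add h1, Real.rpow_add h2]
  have : τ₁ - τ₂ ≠ 0 := by linarith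
  field_simp
  ring

lemma dnum_pos {x : ℝ} (hx : 0 < x) : 0 < dnum τ₁ τ₂ x := by
  unfold dnum
  have : τ₂ ^ x < τ₁ ^ x := Real.rpow_lt_rpow h2.le h12 hx
  apply div_pos <;> linarith

lemma dfac_pos (r : ℕ) : 0 < dfac τ₁ τ₂ r := by
  unfold dfac
  exact Finset.prod_pos fun j _ => dnum_pos h2 h12 (by positivity)


lemma Bc_mul : ∀ n r, r ≤ n →
    Bc τ₁ τ₂ n r * (dfac τ₁ τ₂ r * dfac τ₁ τ₂ (n - r)) = dfac τ₁ τ₂ n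
  | n, 0, _ => by simp [Bc_zero, dfac]
  | 0, r+1, h => by omega
  | n+1, r+1, h => by
    rw [Bc]
    rcases Nat.lt_or_ge (r+1) (n+1) with hlt | hge
    · have hr1n : r + 1 ≤ n := by omega
      have ih1 := Bc_mul n (r+1) hr1n
      have ih2 := Bc_mul n r (by omega)
      have e1 : n + 1 - (r + 1) = (n - (r+1)) + 1 := by omega
      have e2 : n - r = (n - (r+1)) + 1 := by omega
      have c1 : ((n - (r+1) : ℕ) : ℝ) + 1 = (n:ℝ) - r := by
        push_cast [Nat.cast_sub hr1n]; ring
      have hnum : dnum τ₁ τ₂ ((n:ℝ)+1)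
          = τ₂ ^ ((n:ℝ) - r) * dnum τ₁ τ₂ ((r:ℝ)+1) + τ₁ ^ ((r:ℝ)+1) * dnum τ₁ τ₂ ((n:ℝ)-r) := by
        have := dnum_add h2 h12 ((r:ℝ)+1) ((n:ℝ)-r)
        rw [show ((r:ℝ)+1) + ((n:ℝ)-r) = (n:ℝ)+1 by ring] at this
        exact this
      rw [e2, dfac_succ, c1] at ih2
      rw [e1, dfac_succ τ₁ τ₂ (n - (r+1)), c1, dfac_succ τ₁ τ₂ n, hnum,
        dfac_succ τ₁ τ₂ r]
      have ih1' := ih1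
      rw [dfac_succ τ₁ τ₂ r] at ih1'
      linear_combination (τ₁ ^ ((r:ℝ)+1) * dnum τ₁ τ₂ ((n:ℝ)-(r:ℝ))) * ih1' +
        (τ₂ ^ ((n:ℝ)-(r:ℝ)) * dnum τ₁ τ₂ ((r:ℝ)+1)) * ih2
    · have hrn : n = r := by omega
      subst hrn
      rw [Bc_big τ₁ τ₂ n (n+1) (by omega)]
      have ih := Bc_mul n n le_rfl
      simp only [Nat.sub_self] at ih ⊢
      have h0 : dfac τ₁ τ₂ 0 = 1 := by simp [dfac]
      rw [show ((n:ℝ) - (n:ℝ)) = 0 by ring, Real.rpow_zero, dfac_succ τ₁ τ₂ n, h0]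
      rw [h0] at ih
      linear_combination dnum τ₁ τ₂ ((n:ℝ)+1) * ih


lemma step1 (x y : ℝ) (n r : ℕ) :
    Tm τ₁ τ₂ x y n r * dnum τ₁ τ₂ (x + y - (n:ℝ))
      = Tm τ₁ τ₂ x y n r * (τ₂ ^ (x - (r:ℝ)) * dnum τ₁ τ₂ (y - ((n:ℝ) - (r:ℝ))))
        + Tm τ₁ τ₂ x y n r * (τ₁ ^ (y - ((n:ℝ) - (r:ℝ))) * dnum τ₁ τ₂ (x - (r:ℝ))) := by
  have h := dnum_add h2 h12 (y - ((n:ℝ) - (r:ℝ))) (x - (r:ℝ))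
  rw [show (y - ((n:ℝ) - (r:ℝ))) + (x - (r:ℝ)) = x + y - (n:ℝ) by ring] at h
  rw [h]; ring

lemma step3 (x y : ℝ) (n : ℕ) :
    Tm τ₁ τ₂ x y (n+1) 0
      = Tm τ₁ τ₂ x y n 0 * (τ₂ ^ (x - ((0:ℕ):ℝ)) * dnum τ₁ τ₂ (y - ((n:ℝ) - ((0:ℕ):ℝ)))) := by
  have h1 := h2.trans h12
  unfold Tm
  rw [Bc_zero, Bc_zero]
  simp only [Nat.cast_zero, Nat.sub_zero, CharP.cast_eq_zero]
  rw [dfall_succ τ₁ τ₂ y n]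
  rw [show (((n+1:ℕ):ℝ) - 0) * (x - 0) = ((n:ℝ) - 0) * (x - 0) + (x - 0) by push_cast; ring,
    Real.rpow_add h2]
  ring_nf

lemma step2 (x y : ℝ) (n r : ℕ) (hr : r ≤ n) :
    Tm τ₁ τ₂ x y (n+1) (r+1)
      = Tm τ₁ τ₂ x y n (r+1)
          * (τ₂ ^ (x - (((r+1):ℕ):ℝ)) * dnum τ₁ τ₂ (y - ((n:ℝ) - (((r+1):ℕ):ℝ))))
        + Tm τ₁ τ₂ x y n r
          * (τ₁ ^ (y - ((n:ℝ) - (r:ℝ))) * dnum τ₁ τ₂ (x - (r:ℝ))) := by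
  have h1 : (0:ℝ) < τ₁ := h2.trans h12
  rcases Nat.lt_or_ge r n with hlt | hge
  · unfold Tm
    rw [Bc, Nat.succ_sub_succ]
    have hy : dfall τ₁ τ₂ y (n - r)
        = dfall τ₁ τ₂ y (n - (r+1)) * dnum τ₁ τ₂ (y - ((n:ℝ) - (((r+1):ℕ):ℝ))) := by
      rw [show n - r = (n - (r+1)) + 1 by omega, dfall_succ]
      congr 2
      push_cast [Nat.cast_sub (show r+1 ≤ n by omega)]
      ring
    have hx : dfall τ₁ τ₂ x (r+1) = dfall τ₁ τ₂ x r * dnum τ₁ τ₂ (x - (r:ℝ)) :=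
      dfall_succ τ₁ τ₂ x r
    have hA : τ₁ ^ ((((r+1):ℕ):ℝ) * (y - ((((n+1):ℕ):ℝ) - (((r+1):ℕ):ℝ))))
        = τ₁ ^ ((r:ℝ) * (y - ((n:ℝ) - (r:ℝ)))) * τ₁ ^ (y - ((n:ℝ) - (r:ℝ))) := by
      rw [← Real.rpow_add h1]; congr 1; push_cast; ring
    have hB : τ₂ ^ (((((n+1):ℕ):ℝ) - (((r+1):ℕ):ℝ)) * (x - (((r+1):ℕ):ℝ)))
        = τ₂ ^ (((n:ℝ) - (((r+1):ℕ):ℝ)) * (x - (((r+1):ℕ):ℝ))) * τ₂ ^ (x - (((r+1):ℕ):ℝ)) := by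
      rw [← Real.rpow_add h2]; congr 1; push_cast; ring
    have hA' : τ₁ ^ ((((r+1):ℕ):ℝ) * (y - ((n:ℝ) - (((r+1):ℕ):ℝ))))
        = τ₁ ^ ((r:ℝ)+1) * τ₁ ^ ((r:ℝ) * (y - ((n:ℝ) - (r:ℝ)))) * τ₁ ^ (y - ((n:ℝ) - (r:ℝ))) := by
      rw [← Real.rpow_add h1, ← Real.rpow_add h1]; congr 1; push_cast; ring
    have hB'' : τ₂ ^ (((n:ℝ) - (r:ℝ)) * (x - (r:ℝ)))
        = τ₂ ^ ((n:ℝ) - (r:ℝ)) * τ₂ ^ (((n:ℝ) - (((r+1):ℕ):ℝ)) * (x - (((r+1):ℕ):ℝ))) * τ₂ ^ (x - (((r+1):ℕ):ℝ)) := by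
      rw [← Real.rpow_add h2, ← Real.rpow_add h2]; congr 1; push_cast; ring
    rw [hA, hB, hA', hB'', hy, hx]
    ring
  · have hrn : n = r := by omega
    subst hrn
    unfold Tm
    rw [Bc, Bc_big τ₁ τ₂ n (n+1) (by omega)]
    simp only [Nat.sub_self, Nat.add_sub_cancel_left, Nat.add_sub_cancel]
    have z1 : τ₂ ^ (((((n+1):ℕ):ℝ) - (((n+1):ℕ):ℝ)) * (x - (((n+1):ℕ):ℝ))) = 1 := by
      rw [show ((((n+1):ℕ):ℝ) - (((n+1):ℕ):ℝ)) * (x - (((n+1):ℕ):ℝ)) = 0 by push_cast; ring,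
        Real.rpow_zero]
    have z2 : τ₂ ^ ((n:ℝ) - (n:ℝ)) = 1 := by
      rw [show ((n:ℝ) - (n:ℝ)) = 0 by ring, Real.rpow_zero]
    have z3 : τ₂ ^ (((n:ℝ) - (n:ℝ)) * (x - (n:ℝ))) = 1 := by
      rw [show ((n:ℝ) - (n:ℝ)) * (x - (n:ℝ)) = 0 by ring, Real.rpow_zero]
    have hL : τ₁ ^ ((((n+1):ℕ):ℝ) * (y - ((((n+1):ℕ):ℝ) - (((n+1):ℕ):ℝ))))
        = τ₁ ^ ((n:ℝ) * (y - ((n:ℝ) - (n:ℝ)))) * τ₁ ^ (y - ((n:ℝ) - (n:ℝ))) := by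
      rw [← Real.rpow_add h1]; congr 1; push_cast; ring
    rw [z1, z2, z3, hL, dfall_succ τ₁ τ₂ x n]
    ring

lemma dfall_add (x y : ℝ) : ∀ n : ℕ, dfall τ₁ τ₂ (x + y) n = ∑ r ∈ range (n+1), Tm τ₁ τ₂ x y n r
  | 0 => by
    unfold Tm
    norm_num [dfall, Bc]
  | n+1 => by
    rw [dfall_succ, dfall_add x y n, Finset.sum_mul]
    push_cast
    calc ∑ r ∈ range (n+1), Tm τ₁ τ₂ x y n r * dnum τ₁ τ₂ (x + y - (n:ℝ))
        = ∑ r ∈ range (n+1),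
            (Tm τ₁ τ₂ x y n r * (τ₂ ^ (x - (r:ℝ)) * dnum τ₁ τ₂ (y - ((n:ℝ) - (r:ℝ))))
             + Tm τ₁ τ₂ x y n r * (τ₁ ^ (y - ((n:ℝ) - (r:ℝ))) * dnum τ₁ τ₂ (x - (r:ℝ)))) := by
          exact Finset.sum_congr rfl fun r _ => step1 h2 h12 x y n r
      _ = ∑ r ∈ range (n+1+1), Tm τ₁ τ₂ x y (n+1) r := by
          rw [Finset.sum_add_distrib]
          rw [Finset.sum_range_succ' (fun r => Tm τ₁ τ₂ x y (n+1) r) (n+1)]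
          have e2 : ∀ r ∈ range (n+1), Tm τ₁ τ₂ x y (n+1) (r+1)
              = Tm τ₁ τ₂ x y n (r+1)
                  * (τ₂ ^ (x - (((r+1):ℕ):ℝ)) * dnum τ₁ τ₂ (y - ((n:ℝ) - (((r+1):ℕ):ℝ))))
                + Tm τ₁ τ₂ x y n r
                  * (τ₁ ^ (y - ((n:ℝ) - (r:ℝ))) * dnum τ₁ τ₂ (x - (r:ℝ))) := fun r hr =>
            step2 h2 h12 x y n r (by simpa using Finset.mem_range_succ_iff.mp hr)
          rw [Finset.sum_congr rfl e2, Finset.sum_add_distrib, step3 h2 h12 x y n]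
          -- now: ΣF + ΣG = (ΣF∘succ + ΣG) + F 0
          have hF : ∑ r ∈ range (n+1), Tm τ₁ τ₂ x y n r * (τ₂ ^ (x - (r:ℝ)) * dnum τ₁ τ₂ (y - ((n:ℝ) - (r:ℝ))))
              = (∑ r ∈ range (n+1), Tm τ₁ τ₂ x y n (r+1)
                  * (τ₂ ^ (x - (((r+1):ℕ):ℝ)) * dnum τ₁ τ₂ (y - ((n:ℝ) - (((r+1):ℕ):ℝ)))))
                + Tm τ₁ τ₂ x y n 0 * (τ₂ ^ (x - ((0:ℕ):ℝ)) * dnum τ₁ τ₂ (y - ((n:ℝ) - ((0:ℕ):ℝ)))) := by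
            rw [← Finset.sum_range_succ' (fun r => Tm τ₁ τ₂ x y n r * (τ₂ ^ (x - (r:ℝ)) * dnum τ₁ τ₂ (y - ((n:ℝ) - (r:ℝ))))) (n+1)]
            rw [Finset.sum_range_succ (fun r => Tm τ₁ τ₂ x y n r * (τ₂ ^ (x - (r:ℝ)) * dnum τ₁ τ₂ (y - ((n:ℝ) - (r:ℝ))))) (n+1)]
            rw [Tm_big τ₁ τ₂ x y n (n+1) (by omega)]
            ring
          rw [hF]
          push_cast
          ring

lemma cauchy_two (x y : ℝ) (n : ℕ) :
    dbinom τ₁ τ₂ (x + y) n = ∑ r ∈ range (n+1),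
      τ₁ ^ ((r:ℝ) * (y - ((n:ℝ) - (r:ℝ)))) * τ₂ ^ (((n:ℝ) - (r:ℝ)) * (x - (r:ℝ)))
        * dbinom τ₁ τ₂ x r * dbinom τ₁ τ₂ y (n - r) := by
  unfold dbinom
  rw [dfall_add h2 h12 x y n, Finset.sum_div]
  refine Finset.sum_congr rfl fun r hr => ?_
  have hrn : r ≤ n := by simpa [Nat.lt_succ_iff] using hr
  have hb := Bc_mul h2 h12 n r hrn
  have f1 := (dfac_pos h2 h12 r).ne'
  have f2 := (dfac_pos h2 h12 (n-r)).ne'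
  have f3 := (dfac_pos h2 h12 n).ne'
  unfold Tm
  field_simp
  linear_combination (dfall τ₁ τ₂ x r * dfall τ₁ τ₂ y (n-r) * τ₁ ^ ((r:ℝ) * (y - ((n:ℝ) - (r:ℝ))))) * hb

end

-- helper Fin lemmas
lemma Iic_zero_sum {M : Type*} [AddCommMonoid M] {k : ℕ} (f : Fin (k+1) → M) :
    ∑ i ∈ Finset.Iic (0 : Fin (k+1)), f i = f 0 := by
  have : Finset.Iic (0 : Fin (k+1)) = {0} := by
    ext i; simp [Fin.le_zero_iff]
  rw [this, Finset.sum_singleton]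

lemma Iic_succ_sum {M : Type*} [AddCommMonoid M] {k : ℕ} (f : Fin (k+1) → M) (j : Fin k) :
    ∑ i ∈ Finset.Iic j.succ, f i = f 0 + ∑ i ∈ Finset.Iic j, f i.succ := by
  have hset : Finset.Iic j.succ = insert 0 ((Finset.Iic j).map (Fin.succEmb k)) := by
    ext i
    induction i using Fin.cases with
    | zero => simp [Fin.succEmb, Fin.zero_le]
    | succ i' =>
      simp only [Finset.mem_Iic, Finset.mem_insert, Finset.mem_map, Fin.succEmb,
        Function.Embedding.coeFn_mk, Fin.succ_le_succ_iff]
      constructor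
      · intro h; exact Or.inr ⟨i', by simpa using h, rfl⟩
      · rintro (h | ⟨a, ha, h⟩)
        · exact absurd h (Fin.succ_ne_zero i')
        · have : a = i' := Fin.succ_injective _ h
          subst this; simpa using ha
  rw [hset, Finset.sum_insert (by
      simp only [Finset.mem_map, Fin.succEmb, Function.Embedding.coeFn_mk, Finset.mem_Iic]
      rintro ⟨a, _, h⟩
      exact Fin.succ_ne_zero a h),
    Finset.sum_map]
  rfl

lemma filter_pos_sum {k : ℕ} (g : Fin (k+2) → ℝ) :
    ∑ i ∈ Finset.filter (fun i : Fin (k+2) => 0 < (i:ℕ)) Finset.univ, g i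
      = ∑ i : Fin (k+1), g i.succ := by
  have hset : Finset.filter (fun i : Fin (k+2) => 0 < (i:ℕ)) Finset.univ
      = Finset.univ.map (Fin.succEmb (k+1)) := by
    ext i
    induction i using Fin.cases with
    | zero => simp [Fin.succEmb, (Fin.succ_ne_zero _)]
    | succ i' =>
      simp only [Fin.val_succ, Finset.mem_filter, Finset.mem_univ, true_and, Finset.mem_map,
        Fin.succEmb, Function.Embedding.coeFn_mk]
      exact ⟨fun _ => ⟨i', rfl⟩, fun _ => Nat.succ_pos _⟩
  rw [hset, Finset.sum_map]
  rfl

lemma filter_succ_sum {k : ℕ} (g : Fin (k+2) → ℝ) (j : Fin k) :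
    ∑ i ∈ Finset.filter (fun i : Fin (k+2) => ((j.succ : Fin (k+1)) : ℕ) < (i:ℕ)) Finset.univ, g i
      = ∑ i ∈ Finset.filter (fun i : Fin (k+1) => (j:ℕ) < (i:ℕ)) Finset.univ, g i.succ := by
  have hset : Finset.filter (fun i : Fin (k+2) => ((j.succ : Fin (k+1)) : ℕ) < (i:ℕ)) Finset.univ
      = (Finset.filter (fun i : Fin (k+1) => (j:ℕ) < (i:ℕ)) Finset.univ).map (Fin.succEmb (k+1)) := by
    ext i
    induction i using Fin.cases with
    | zero =>
      simp only [Finset.mem_filter, Finset.mem_univ, true_and, Finset.mem_map, Fin.succEmb,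
        Function.Embedding.coeFn_mk, Fin.val_zero]
      constructor
      · omega
      · rintro ⟨a, _, h⟩; exact absurd h (Fin.succ_ne_zero a)
    | succ i' =>
      simp only [Finset.mem_filter, Finset.mem_univ, true_and, Finset.mem_map, Fin.succEmb,
        Function.Embedding.coeFn_mk, Fin.val_succ]
      constructor
      · intro h; exact ⟨i', by omega, rfl⟩
      · rintro ⟨a, ha, h⟩
        have : a = i' := by
          apply Fin.succ_injective; exact h
        omega
  rw [hset, Finset.sum_map]
  rfl

lemma pi_filter_congr {k m N : ℕ} (h : m ≤ N) :
    (Fintype.piFinset fun _ : Fin k => Finset.range (m+1)).filter (fun s => ∑ j, s j ≤ m)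
      = (Fintype.piFinset fun _ : Fin k => Finset.range (N+1)).filter (fun s => ∑ j, s j ≤ m) := by
  ext s
  simp only [Finset.mem_filter, Fintype.mem_piFinset, Finset.mem_range]
  constructor
  · rintro ⟨hs, hsum⟩
    exact ⟨fun i => by have := hs i; omega, hsum⟩
  · rintro ⟨hs, hsum⟩
    refine ⟨fun i => ?_, hsum⟩
    have : s i ≤ ∑ j, s j := Finset.single_le_sum (fun j _ => Nat.zero_le _) (Finset.mem_univ i)
    omega


/-- Multivariate deformed Cauchy formula:
`C(x₁+⋯+x_{k+1}, n) = Σ τ₁^{Σ_j r_j(z_j−(n−s_j))} τ₂^{Σ_j (n−s_j)(x_j−r_j)}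
  Π_j C(x_j, r_j)`, summed over tuples `(r₁,…,r_k)` with `r₁+⋯+r_k ≤ n`,
where `s_j = r₁+⋯+r_j`, `r_{k+1} = n − s_k` and `z_j = x_{j+1}+⋯+x_{k+1}`. -/
theorem deformed_multivariate_cauchy
    (τ₁ τ₂ : ℝ) (hτ₂ : 0 < τ₂) (hττ : τ₂ < τ₁)
    (n k : ℕ) (hk : 1 ≤ k) (x : Fin (k + 1) → ℝ) :
    dbinom τ₁ τ₂ (∑ i, x i) n =
      ∑ r ∈ (Fintype.piFinset fun _ : Fin k => Finset.range (n + 1)).filter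
          (fun r => ∑ j, r j ≤ n),
        τ₁ ^ (∑ j : Fin k, (r j : ℝ) *
            ((∑ i ∈ Finset.univ.filter fun i : Fin (k + 1) => (j : ℕ) < (i : ℕ), x i) -
              ((n : ℝ) - ((∑ i ∈ Finset.Iic j, r i : ℕ) : ℝ)))) *
          τ₂ ^ (∑ j : Fin k, ((n : ℝ) - ((∑ i ∈ Finset.Iic j, r i : ℕ) : ℝ)) *
              (x j.castSucc - (r j : ℝ))) *
          ∏ j : Fin (k + 1), dbinom τ₁ τ₂ (x j) ((Fin.snoc r (n - ∑ i, r i) : Fin (k + 1) → ℕ) j) := by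
  induction k, hk using Nat.le_induction generalizing n with
  | base =>
    rw [Fin.sum_univ_two, cauchy_two hτ₂ hττ (x 0) (x 1) n]
    refine Finset.sum_nbij' (fun m => (fun _ : Fin 1 => m)) (fun r => r 0) ?_ ?_ ?_ ?_ ?_
    · intro m hm
      simp only [Finset.mem_filter, Fintype.mem_piFinset, Fin.sum_univ_one]
      exact ⟨fun _ => hm, by simpa [Nat.lt_succ_iff] using hm⟩
    · intro r hr
      simp only [Finset.mem_filter, Fintype.mem_piFinset] at hr
      exact hr.1 0
    · intro m _; rfl
    · intro r _; funext i; fin_cases i; rfl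
    · intro m hm
      simp only [Fin.sum_univ_one, Fin.val_zero, Fin.castSucc_zero]
      rw [Iic_zero_sum, filter_pos_sum, Fin.sum_univ_one]
      rw [Fin.prod_univ_succ, Fin.prod_univ_succ, Fin.prod_univ_zero]
      simp [Fin.snoc]
      ring
  | succ k hk ih =>
    rw [Fin.sum_univ_succ x, cauchy_two hτ₂ hττ (x 0) (∑ i : Fin (k+1), x i.succ) n]
    have hexp : ∀ m ∈ Finset.range (n+1),
        τ₁ ^ ((m:ℝ) * ((∑ i : Fin (k+1), x i.succ) - ((n:ℝ) - (m:ℝ)))) *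
          τ₂ ^ (((n:ℝ) - (m:ℝ)) * (x 0 - (m:ℝ))) * dbinom τ₁ τ₂ (x 0) m *
          dbinom τ₁ τ₂ (∑ i : Fin (k+1), x i.succ) (n - m)
        = ∑ s ∈ (Fintype.piFinset fun _ : Fin k => Finset.range (n + 1)).filter
            (fun s => ∑ j, s j ≤ n - m),
            τ₁ ^ ((m:ℝ) * ((∑ i : Fin (k+1), x i.succ) - ((n:ℝ) - (m:ℝ)))) *
            τ₂ ^ (((n:ℝ) - (m:ℝ)) * (x 0 - (m:ℝ))) * dbinom τ₁ τ₂ (x 0) m *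
            (τ₁ ^ (∑ j : Fin k, (s j : ℝ) *
                ((∑ i ∈ Finset.univ.filter fun i : Fin (k + 1) => (j : ℕ) < (i : ℕ), x i.succ) -
                  (((n-m : ℕ) : ℝ) - ((∑ i ∈ Finset.Iic j, s i : ℕ) : ℝ)))) *
              τ₂ ^ (∑ j : Fin k, (((n-m:ℕ) : ℝ) - ((∑ i ∈ Finset.Iic j, s i : ℕ) : ℝ)) *
                  ((fun i : Fin (k+1) => x i.succ) j.castSucc - (s j : ℝ))) *
              ∏ j : Fin (k + 1), dbinom τ₁ τ₂ (x j.succ)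
                ((Fin.snoc s ((n-m) - ∑ i, s i) : Fin (k + 1) → ℕ) j)) := by
      intro m hm
      have hmn : m ≤ n := by simp [Nat.lt_succ_iff] at hm; exact hm
      rw [ih (n - m) (fun i => x i.succ), pi_filter_congr (Nat.sub_le n m), Finset.mul_sum]
    rw [Finset.sum_congr rfl hexp, Finset.sum_sigma']
    refine Finset.sum_nbij' (fun p => Fin.cons p.1 p.2) (fun r => ⟨r 0, Fin.tail r⟩) ?_ ?_ ?_ ?_ ?_
    · rintro ⟨m, s⟩ hp
      simp only [Finset.mem_sigma, Finset.mem_range, Finset.mem_filter,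
        Fintype.mem_piFinset] at hp ⊢
      obtain ⟨hm, hs, hsum⟩ := hp
      refine ⟨fun i => ?_, ?_⟩
      · induction i using Fin.cases with
        | zero => simpa using hm
        | succ i' => simpa using hs i'
      · rw [Fin.sum_cons]; omega
    · intro r hr
      simp only [Finset.mem_filter, Fintype.mem_piFinset, Finset.mem_sigma,
        Finset.mem_range] at hr ⊢
      obtain ⟨hr1, hr2⟩ := hr
      have h0 : r 0 ≤ ∑ j, r j := Finset.single_le_sum (fun j _ => Nat.zero_le _) (Finset.mem_univ 0)
      refine ⟨hr1 0, fun i => hr1 i.succ, ?_⟩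
      have : ∑ j, r j = r 0 + ∑ i : Fin k, r i.succ := Fin.sum_univ_succ r
      unfold Fin.tail
      omega
    · rintro ⟨m, s⟩ _
      simp [Fin.tail_cons]
    · intro r _
      exact Fin.cons_self_tail r
    · rintro ⟨m, s⟩ hp
      simp only [Finset.mem_sigma, Finset.mem_range, Finset.mem_filter,
        Fintype.mem_piFinset] at hp
      obtain ⟨hm', hs, hsum⟩ := hp
      have hmn : m ≤ n := by omega
      have h1 : (0:ℝ) < τ₁ := hτ₂.trans hττ
      dsimp only
      have hIic0 : (∑ i ∈ Finset.Iic (0 : Fin (k+1)), (Fin.cons m s : Fin (k+1) → ℕ) i) = m := by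
        rw [Iic_zero_sum]; rfl
      have hIicsucc : ∀ j : Fin k,
          (∑ i ∈ Finset.Iic (Fin.succ j), (Fin.cons m s : Fin (k+1) → ℕ) i)
            = m + ∑ i ∈ Finset.Iic j, s i := by
        intro j
        rw [Iic_succ_sum]
        simp [Fin.cons_succ]
      have hcast : ∀ j : Fin k,
          ((n - m : ℕ) : ℝ) - ((∑ i ∈ Finset.Iic j, s i : ℕ) : ℝ)
            = (n:ℝ) - ((m + ∑ i ∈ Finset.Iic j, s i : ℕ) : ℝ) := by
        intro j
        push_cast [Nat.cast_sub hmn]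
        ring
      have hE1 : (∑ j : Fin (k+1), ((Fin.cons m s : Fin (k+1) → ℕ) j : ℝ) *
            ((∑ i ∈ Finset.univ.filter fun i : Fin (k+1+1) => (j : ℕ) < (i : ℕ), x i) -
              ((n : ℝ) - ((∑ i ∈ Finset.Iic j, (Fin.cons m s : Fin (k+1) → ℕ) i : ℕ) : ℝ))))
          = (m:ℝ) * ((∑ i : Fin (k+1), x i.succ) - ((n:ℝ) - (m:ℝ)))
            + ∑ j : Fin k, (s j : ℝ) *
              ((∑ i ∈ Finset.univ.filter fun i : Fin (k+1) => (j : ℕ) < (i : ℕ), x i.succ) -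
                ((n:ℝ) - ((m + ∑ i ∈ Finset.Iic j, s i : ℕ) : ℝ))) := by
        rw [Fin.sum_univ_succ]
        congr 1
        · rw [Fin.cons_zero, hIic0]
          simp only [Fin.val_zero]
          exact congrArg (fun t => (m:ℝ) * (t - ((n:ℝ) - (m:ℝ)))) (filter_pos_sum x)
        · refine Finset.sum_congr rfl fun j _ => ?_
          rw [Fin.cons_succ, hIicsucc j, filter_succ_sum x j]
      have hE2 : (∑ j : Fin (k+1), ((n : ℝ) - ((∑ i ∈ Finset.Iic j, (Fin.cons m s : Fin (k+1) → ℕ) i : ℕ) : ℝ)) *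
            (x j.castSucc - ((Fin.cons m s : Fin (k+1) → ℕ) j : ℝ)))
          = ((n:ℝ) - (m:ℝ)) * (x 0 - (m:ℝ))
            + ∑ j : Fin k, ((n:ℝ) - ((m + ∑ i ∈ Finset.Iic j, s i : ℕ) : ℝ)) *
                (x j.castSucc.succ - (s j : ℝ)) := by
        rw [Fin.sum_univ_succ]
        congr 1
        · refine Finset.sum_congr rfl fun j _ => ?_
          rw [Fin.cons_succ, hIicsucc j, Fin.succ_castSucc]
      have hP : (∏ j : Fin (k+1+1), dbinom τ₁ τ₂ (x j)
            ((Fin.snoc (Fin.cons m s : Fin (k+1) → ℕ)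
              (n - ∑ i : Fin (k+1), (Fin.cons m s : Fin (k+1) → ℕ) i) : Fin (k+1+1) → ℕ) j))
          = dbinom τ₁ τ₂ (x 0) m * ∏ j : Fin (k+1), dbinom τ₁ τ₂ (x j.succ)
              ((Fin.snoc s (n - m - ∑ i, s i) : Fin (k+1) → ℕ) j) := by
        rw [Fin.sum_cons, show n - (m + ∑ i, s i) = n - m - ∑ i, s i by omega,
          ← Fin.cons_snoc_eq_snoc_cons, Fin.prod_univ_succ, Fin.cons_zero]
        refine congrArg _ (Finset.prod_congr rfl fun j _ => ?_)
        rw [Fin.cons_succ]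
      rw [hE1, hE2, hP, Real.rpow_add h1, Real.rpow_add hτ₂]
      have hE1' : (∑ j : Fin k, (s j : ℝ) *
            ((∑ i ∈ Finset.univ.filter fun i : Fin (k+1) => (j : ℕ) < (i : ℕ), x i.succ) -
              (((n - m : ℕ) : ℝ) - ((∑ i ∈ Finset.Iic j, s i : ℕ) : ℝ))))
          = ∑ j : Fin k, (s j : ℝ) *
            ((∑ i ∈ Finset.univ.filter fun i : Fin (k+1) => (j : ℕ) < (i : ℕ), x i.succ) -
              ((n:ℝ) - ((m + ∑ i ∈ Finset.Iic j, s i : ℕ) : ℝ))) :=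
        Finset.sum_congr rfl fun j _ => by rw [hcast j]
      have hE2' : (∑ j : Fin k, (((n - m : ℕ) : ℝ) - ((∑ i ∈ Finset.Iic j, s i : ℕ) : ℝ)) *
            (x j.castSucc.succ - (s j : ℝ)))
          = ∑ j : Fin k, ((n:ℝ) - ((m + ∑ i ∈ Finset.Iic j, s i : ℕ) : ℝ)) *
            (x j.castSucc.succ - (s j : ℝ)) :=
        Finset.sum_congr rfl fun j _ => by rw [hcast j]
      rw [hE1', hE2']
      ring
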